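/- If in a directed acyclic graph there exists a d-path from X to Y with respect to a conditioning set Z of cardinality k, then there exists a d-path from X to Y with respect to Z having at most k colliders. -/
import Mathlib


/-- A d-path `W 0, ..., W m` with respect to conditioning set `Z` in a digraph `E`:
consecutive vertices are adjacent (in either direction), internal non-colliders
are not in `Z`, and every collider has a descendant in `Z`. -/
def IsDPath {V : Type*} (E : V → V → Prop) (Z : Set V) (W : ℕ → V) (m : ℕ) : Prop :=
  (∀ i < m, E (W i) (W (i+1)) ∨ E (W (i+1)) (W i)) ∧
  (∀ i, 0 < i → i < m →
    ¬(E (W (i-1)) (W i) ∧ E (W (i+1)) (W i)) → W i ∉ Z) ∧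
  (∀ i, 0 < i → i < m →
    (E (W (i-1)) (W i) ∧ E (W (i+1)) (W i)) →
      ∃ d ∈ Z, Relation.ReflTransGen E (W i) d)

/-- The number of colliders of a path. -/
noncomputable def colliderCount {V : Type*} (E : V → V → Prop) (W : ℕ → V) (m : ℕ) : ℕ :=
  {i | 0 < i ∧ i < m ∧ E (W (i-1)) (W i) ∧ E (W (i+1)) (W i)}.ncard

lemma firstZ {V : Type*} (E : V → V → Prop) (Z : Set V) :
    ∀ a d : V, Relation.ReflTransGen E a d → d ∈ Z →
      ∃ z, z ∈ Z ∧ ∃ (p : ℕ) (f : ℕ → V), f 0 = a ∧ f p = z ∧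
        (∀ t < p, E (f t) (f (t+1))) ∧ (∀ t < p, f t ∉ Z) := by
  intro a d had hd
  induction had using Relation.ReflTransGen.head_induction_on with
  | refl => exact ⟨d, hd, 0, fun _ => d, rfl, rfl, by omega, by omega⟩
  | @head a b hab hbd ih =>
    by_cases ha : a ∈ Z
    · exact ⟨a, ha, 0, fun _ => a, rfl, rfl, by omega, by omega⟩
    · obtain ⟨z, hz, p, f, hf0, hfp, hfE, hfZ⟩ := ih
      refine ⟨z, hz, p + 1, fun i => if i = 0 then a else f (i - 1), by simp, ?_, ?_, ?_⟩
      · simp [hfp]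
      · intro t ht
        rcases Nat.eq_zero_or_pos t with h0 | h0
        · subst h0; simpa [hf0] using hab
        · obtain ⟨s, rfl⟩ : ∃ s, t = s + 1 := ⟨t - 1, by omega⟩
          simpa using hfE s (by omega)
      · intro t ht
        rcases Nat.eq_zero_or_pos t with h0 | h0
        · subst h0; simpa using ha
        · obtain ⟨s, rfl⟩ : ∃ s, t = s + 1 := ⟨t - 1, by omega⟩
          simpa using hfZ s (by omega)

lemma shortcut {V : Type*} (E : V → V → Prop) (Z : Set V)
    (hnb : ∀ a b, E a b → ¬ E b a)
    (W : ℕ → V) (m : ℕ) (hW : IsDPath E Z W m)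
    (c1 c2 : ℕ) (hc1 : 0 < c1) (h12 : c1 < c2) (hc2 : c2 < m)
    (col1 : E (W (c1-1)) (W c1) ∧ E (W (c1+1)) (W c1))
    (col2 : E (W (c2-1)) (W c2) ∧ E (W (c2+1)) (W c2))
    (z : V) (hz : z ∈ Z) (p q : ℕ) (f g : ℕ → V)
    (hf0 : f 0 = W c1) (hfp : f p = z)
    (hfE : ∀ t < p, E (f t) (f (t+1))) (hfZ : ∀ t < p, f t ∉ Z)
    (hg0 : g 0 = W c2) (hgq : g q = z)
    (hgE : ∀ t < q, E (g t) (g (t+1))) (hgZ : ∀ t < q, g t ∉ Z) :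
    ∃ (m' : ℕ) (W' : ℕ → V), IsDPath E Z W' m' ∧ W' 0 = W 0 ∧ W' m' = W m ∧
      colliderCount E W' m' < colliderCount E W m := by
  obtain ⟨hE, hNC, hC⟩ := hW
  set u := c1 + p + q with hu
  set W' : ℕ → V := fun i =>
    if i ≤ c1 then W i else if i ≤ c1 + p then f (i - c1)
    else if i ≤ u then g (u - i) else W (i - u + c2) with hW'
  have hWa : ∀ i, i ≤ c1 → W' i = W i := by
    intro i hi; simp only [hW']; rw [if_pos hi]
  have hWb : ∀ i, c1 ≤ i → i ≤ c1 + p → W' i = f (i - c1) := by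
    intro i h1 h2
    rcases eq_or_lt_of_le h1 with heq | h
    · rw [← heq, hWa c1 le_rfl, Nat.sub_self, hf0]
    · simp only [hW']; rw [if_neg (by omega), if_pos h2]
  have hWc : ∀ i, c1 + p ≤ i → i ≤ u → W' i = g (u - i) := by
    intro i h1 h2
    by_cases hb : i ≤ c1 + p
    · have hi : i = c1 + p := by omega
      rw [hi, hWb (c1+p) (by omega) le_rfl, show c1+p-c1 = p from by omega, hfp,
          show u - (c1+p) = q from by omega, hgq]
    · simp only [hW']; rw [if_neg (by omega), if_neg (by omega), if_pos h2]
  have hWd : ∀ i, u ≤ i → W' i = W (i - u + c2) := by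
    intro i h1
    by_cases ha : i ≤ u
    · have hi : i = u := by omega
      rw [hi, hWc u (by omega) le_rfl, Nat.sub_self, Nat.zero_add, hg0]
    · simp only [hW']; rw [if_neg (by omega), if_neg (by omega), if_neg (by omega)]
  -- descendant facts along the walks
  have hwalk : ∀ (h : ℕ → V) (n : ℕ), (∀ t < n, E (h t) (h (t+1))) →
      ∀ t ≤ n, Relation.ReflTransGen E (h t) (h n) := by
    intro h n hEn t ht
    obtain ⟨s, rfl⟩ : ∃ s, n = t + s := ⟨n - t, by omega⟩
    have : ∀ s', t + s' ≤ t + s → Relation.ReflTransGen E (h t) (h (t + s')) := by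
      intro s'
      induction s' with
      | zero => intro _; exact Relation.ReflTransGen.refl
      | succ k ih => intro hk; exact (ih (by omega)).tail (hEn (t+k) (by omega))
    exact this s le_rfl
  -- the collider at c1 + p
  have hcolt : E (W' (c1+p-1)) (W' (c1+p)) ∧ E (W' (c1+p+1)) (W' (c1+p)) := by
    constructor
    · by_cases hp : 0 < p
      · rw [hWb (c1+p-1) (by omega) (by omega), hWb (c1+p) (by omega) le_rfl,
            show c1+p-1-c1 = p-1 from by omega, show c1+p-c1 = p from by omega]
        have := hfE (p-1) (by omega)
        rwa [show p - 1 + 1 = p from by omega] at this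
      · have hp0 : p = 0 := by omega
        rw [show c1+p-1 = c1-1 from by omega, show c1+p = c1 from by omega,
            hWa (c1-1) (by omega), hWa c1 le_rfl]
        exact col1.1
    · by_cases hq : 0 < q
      · rw [hWc (c1+p+1) (by omega) (by omega), hWc (c1+p) (by omega) (by omega),
            show u - (c1+p+1) = q-1 from by omega, show u - (c1+p) = q from by omega]
        have := hgE (q-1) (by omega)
        rwa [show q - 1 + 1 = q from by omega] at this
      · have hq0 : q = 0 := by omega
        rw [show c1+p+1 = u+1 from by omega, show c1+p = u from by omega,
            hWd (u+1) (by omega), hWd u le_rfl,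
            show u+1-u+c2 = c2+1 from by omega, show u-u+c2 = c2 from by omega]
        exact col2.2
  have hWtz : W' (c1+p) = z := by
    rw [hWb (c1+p) (by omega) le_rfl, show c1+p-c1 = p from by omega, hfp]
  -- classification of colliders of W'
  have master : ∀ i, 0 < i → i < u + (m - c2) →
      E (W' (i-1)) (W' i) → E (W' (i+1)) (W' i) →
      (i < c1 ∧ E (W (i-1)) (W i) ∧ E (W (i+1)) (W i)) ∨ (i = c1 + p) ∨
      (u < i ∧ E (W (i-u+c2-1)) (W (i-u+c2)) ∧ E (W (i-u+c2+1)) (W (i-u+c2))) := by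
    intro i hi0 him hL hR
    by_cases h1 : i < c1
    · left
      refine ⟨h1, ?_, ?_⟩
      · rw [hWa (i-1) (by omega), hWa i (by omega)] at hL; exact hL
      · rw [hWa (i+1) (by omega), hWa i (by omega)] at hR; exact hR
    · by_cases h2 : i < c1 + p
      · exfalso
        rw [hWb (i+1) (by omega) (by omega), hWb i (by omega) (by omega),
            show i+1-c1 = (i-c1)+1 from by omega] at hR
        exact hnb _ _ (hfE (i - c1) (by omega)) hR
      · by_cases h3 : i = c1 + p
        · right; left; exact h3
        · by_cases h4 : i ≤ u
          · exfalso
            rw [hWc (i-1) (by omega) (by omega), hWc i (by omega) (by omega),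
                show u - (i-1) = (u-i)+1 from by omega] at hL
            exact hnb _ _ (hgE (u - i) (by omega)) hL
          · right; right
            refine ⟨by omega, ?_, ?_⟩
            · rw [hWd (i-1) (by omega), hWd i (by omega),
                  show i-1-u+c2 = i-u+c2-1 from by omega] at hL
              exact hL
            · rw [hWd (i+1) (by omega), hWd i (by omega),
                  show i+1-u+c2 = i-u+c2+1 from by omega] at hR
              exact hR
  refine ⟨u + (m - c2), W', ⟨?_, ?_, ?_⟩, ?_, ?_, ?_⟩
  -- edges
  · intro i hi
    by_cases h1 : i < c1
    · rw [hWa i (by omega), hWa (i+1) (by omega)]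
      exact hE i (by omega)
    · by_cases h2 : i < c1 + p
      · rw [hWb i (by omega) (by omega), hWb (i+1) (by omega) (by omega),
            show i+1-c1 = (i-c1)+1 from by omega]
        exact Or.inl (hfE (i - c1) (by omega))
      · by_cases h3 : i < u
        · rw [hWc i (by omega) (by omega), hWc (i+1) (by omega) (by omega),
              show u - i = (u - (i+1)) + 1 from by omega]
          exact Or.inr (hgE (u - (i+1)) (by omega))
        · rw [hWd i (by omega), hWd (i+1) (by omega),
              show i+1-u+c2 = (i-u+c2)+1 from by omega]
          exact hE (i - u + c2) (by omega)
  -- non-colliders avoid Z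
  · intro i hi0 him hncol
    by_cases h1 : i < c1
    · rw [hWa i (by omega)]
      refine hNC i hi0 (by omega) fun hc => hncol ?_
      rw [hWa (i-1) (by omega), hWa i (by omega), hWa (i+1) (by omega)]
      exact hc
    · by_cases h2 : i < c1 + p
      · rw [hWb i (by omega) (by omega)]
        exact hfZ (i - c1) (by omega)
      · by_cases h3 : i = c1 + p
        · subst h3; exact absurd hcolt hncol
        · by_cases h4 : i ≤ u
          · rw [hWc i (by omega) (by omega)]
            exact hgZ (u - i) (by omega)
          · rw [hWd i (by omega)]
            refine hNC (i-u+c2) (by omega) (by omega) fun hc => hncol ?_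
            constructor
            · rw [hWd (i-1) (by omega), hWd i (by omega),
                  show i-1-u+c2 = i-u+c2-1 from by omega]
              exact hc.1
            · rw [hWd (i+1) (by omega), hWd i (by omega),
                  show i+1-u+c2 = i-u+c2+1 from by omega]
              exact hc.2
  -- colliders have descendants in Z
  · intro i hi0 him hcol
    rcases master i hi0 him hcol.1 hcol.2 with ⟨h1, hc⟩ | h | ⟨h1, hc⟩
    · obtain ⟨d, hd, hrtg⟩ := hC i hi0 (by omega) hc
      exact ⟨d, hd, by rw [hWa i (by omega)]; exact hrtg⟩
    · subst h
      exact ⟨z, hz, by rw [hWtz]⟩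
    · obtain ⟨d, hd, hrtg⟩ := hC (i-u+c2) (by omega) (by omega) hc
      exact ⟨d, hd, by rw [hWd i (by omega)]; exact hrtg⟩
  -- endpoints
  · exact hWa 0 (by omega)
  · rw [hWd (u + (m - c2)) (by omega), show u + (m - c2) - u + c2 = m from by omega]
  -- collider count decreases
  · simp only [colliderCount]
    set Sold := {i | 0 < i ∧ i < m ∧ E (W (i-1)) (W i) ∧ E (W (i+1)) (W i)} with hSo
    set Snew := {i | 0 < i ∧ i < u + (m - c2) ∧ E (W' (i-1)) (W' i) ∧ E (W' (i+1)) (W' i)}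
      with hSn
    have hSoldfin : Sold.Finite :=
      Set.Finite.subset (Set.finite_Iio m) (fun i hi => hi.2.1)
    set A := Sold ∩ Set.Iio c1 with hA
    set B := Sold ∩ Set.Ioi c2 with hB
    have hAfin : A.Finite := hSoldfin.inter_of_left _
    have hBfin : B.Finite := hSoldfin.inter_of_left _
    have himfin : ((fun j => j - c2 + u) '' B).Finite := hBfin.image _
    have hsubnew : Snew ⊆ A ∪ ({c1+p} ∪ (fun j => j - c2 + u) '' B) := by
      intro i hi
      obtain ⟨hi0, him, hL, hR⟩ := hi
      rcases master i hi0 him hL hR with ⟨h1, hc⟩ | h | ⟨h1, hc⟩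
      · exact Or.inl ⟨⟨hi0, by omega, hc⟩, h1⟩
      · exact Or.inr (Or.inl h)
      · exact Or.inr (Or.inr ⟨i - u + c2, ⟨⟨by omega, by omega, hc⟩, by
          simp only [Set.mem_Ioi]; omega⟩, by show i - u + c2 - c2 + u = i; omega⟩)
    have hinj : Set.InjOn (fun j => j - c2 + u) B := by
      intro a ha b hb hab
      have ha2 : c2 < a := ha.2
      have hb2 : c2 < b := hb.2
      simp only at hab
      omega
    have hub : Snew.ncard ≤ A.ncard + (1 + B.ncard) := by
      calc Snew.ncard ≤ (A ∪ ({c1+p} ∪ (fun j => j - c2 + u) '' B)).ncard :=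
            Set.ncard_le_ncard hsubnew (hAfin.union ((Set.finite_singleton _).union himfin))
        _ ≤ A.ncard + ({c1+p} ∪ (fun j => j - c2 + u) '' B).ncard := Set.ncard_union_le _ _
        _ ≤ A.ncard + (({c1+p} : Set ℕ).ncard + ((fun j => j - c2 + u) '' B).ncard) := by
            exact Nat.add_le_add_left (Set.ncard_union_le _ _) _
        _ = A.ncard + (1 + B.ncard) := by
            rw [Set.ncard_singleton, Set.ncard_image_of_injOn hinj]
    have hc1mem : c1 ∈ Sold := ⟨hc1, by omega, col1⟩
    have hc2mem : c2 ∈ Sold := ⟨by omega, hc2, col2⟩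
    have hsubold : A ∪ ({c1} ∪ ({c2} ∪ B)) ⊆ Sold := by
      intro i hi
      rcases hi with hi | hi | hi | hi
      · exact hi.1
      · simp only [Set.mem_singleton_iff] at hi; subst hi; exact hc1mem
      · simp only [Set.mem_singleton_iff] at hi; subst hi; exact hc2mem
      · exact hi.1
    have d1 : Disjoint ({c2} : Set ℕ) B := by
      rw [Set.disjoint_left]
      intro a ha hb
      simp only [Set.mem_singleton_iff] at ha
      have := hb.2
      simp only [Set.mem_Ioi] at this
      omega
    have d2 : Disjoint ({c1} : Set ℕ) ({c2} ∪ B) := by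
      rw [Set.disjoint_left]
      intro a ha hb
      simp only [Set.mem_singleton_iff] at ha
      rcases hb with hb | hb
      · simp only [Set.mem_singleton_iff] at hb; omega
      · have := hb.2; simp only [Set.mem_Ioi] at this; omega
    have d3 : Disjoint A ({c1} ∪ ({c2} ∪ B)) := by
      rw [Set.disjoint_left]
      intro a ha hb
      have ha2 : a < c1 := ha.2
      rcases hb with hb | hb | hb
      · simp only [Set.mem_singleton_iff] at hb; omega
      · simp only [Set.mem_singleton_iff] at hb; omega
      · have := hb.2; simp only [Set.mem_Ioi] at this; omega
    have hlb : A.ncard + (1 + (1 + B.ncard)) ≤ Sold.ncard := by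
      have e1 : ({c2} ∪ B : Set ℕ).ncard = 1 + B.ncard := by
        rw [Set.ncard_union_eq d1 (Set.finite_singleton _) hBfin, Set.ncard_singleton]
      have e2 : ({c1} ∪ ({c2} ∪ B) : Set ℕ).ncard = 1 + (1 + B.ncard) := by
        rw [Set.ncard_union_eq d2 (Set.finite_singleton _)
          ((Set.finite_singleton _).union hBfin), Set.ncard_singleton, e1]
      have e3 : (A ∪ ({c1} ∪ ({c2} ∪ B)) : Set ℕ).ncard = A.ncard + (1 + (1 + B.ncard)) := by
        rw [Set.ncard_union_eq d3 hAfin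
          ((Set.finite_singleton _).union ((Set.finite_singleton _).union hBfin)), e2]
      rw [← e3]
      exact Set.ncard_le_ncard hsubold hSoldfin
    omega
/-- If there is a d-path from `X` to `Y` with respect to a conditioning set `Z` of
cardinality `k` in a DAG, then there is one with at most `k` colliders. -/
theorem dpath_few_colliders {V : Type*} (E : V → V → Prop)
    (hacyc : ∀ v, ¬ Relation.TransGen E v v)
    (Z : Finset V) (k : ℕ) (hk : Z.card = k) (X Y : V)
    (h : ∃ (m : ℕ) (W : ℕ → V), IsDPath E (↑Z) W m ∧ W 0 = X ∧ W m = Y) :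
    ∃ (m : ℕ) (W : ℕ → V), IsDPath E (↑Z) W m ∧ W 0 = X ∧ W m = Y ∧
      colliderCount E W m ≤ k := by
  classical
  obtain ⟨m0, W0, hW0, hX0, hY0⟩ := h
  have hnb : ∀ a b, E a b → ¬ E b a := fun a b hab hba =>
    hacyc a ((Relation.TransGen.single hab).trans (Relation.TransGen.single hba))
  suffices H : ∀ n (m : ℕ) (W : ℕ → V), colliderCount E W m = n → IsDPath E (↑Z) W m →
      W 0 = X → W m = Y → ∃ (m : ℕ) (W : ℕ → V), IsDPath E (↑Z) W m ∧ W 0 = X ∧ W m = Y ∧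
      colliderCount E W m ≤ k by
    exact H _ m0 W0 rfl hW0 hX0 hY0
  intro n
  induction n using Nat.strong_induction_on with
  | _ n ih =>
    intro m W hn hW hX hY
    by_cases hnk : n ≤ k
    · exact ⟨m, W, hW, hX, hY, by omega⟩
    · set S := {i | 0 < i ∧ i < m ∧ E (W (i-1)) (W i) ∧ E (W (i+1)) (W i)} with hS
      have hcc : colliderCount E W m = S.ncard := rfl
      have hSfin : S.Finite := Set.Finite.subset (Set.finite_Iio m) (fun i hi => hi.2.1)
      have key : ∀ i ∈ S, ∃ zz, zz ∈ (↑Z : Set V) ∧ ∃ (p : ℕ) (f : ℕ → V), f 0 = W i ∧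
          f p = zz ∧ (∀ t < p, E (f t) (f (t+1))) ∧ (∀ t < p, f t ∉ (↑Z : Set V)) := by
        intro i hi
        obtain ⟨d, hd, hrtg⟩ := hW.2.2 i hi.1 hi.2.1 hi.2.2
        exact firstZ E (↑Z) (W i) d hrtg hd
      set F : ℕ → V := fun i => if h : i ∈ S then (key i h).choose else X with hF
      have hFval : ∀ i (h : i ∈ S), F i = (key i h).choose := by
        intro i h; rw [hF]; simp only [dif_pos h]
      have hFmem : ∀ i ∈ hSfin.toFinset, F i ∈ Z := by
        intro i hi
        rw [Set.Finite.mem_toFinset] at hi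
        rw [hFval i hi]
        exact (key i hi).choose_spec.1
      have hcard : Z.card < hSfin.toFinset.card := by
        rw [← Set.ncard_eq_toFinset_card _ hSfin, ← hcc, hn, hk]
        omega
      obtain ⟨a, haS, b, hbS, hne, hFeq⟩ :=
        Finset.exists_ne_map_eq_of_card_lt_of_maps_to hcard hFmem
      rw [Set.Finite.mem_toFinset] at haS hbS
      have main : ∀ c1 c2, c1 ∈ S → c2 ∈ S → c1 < c2 → F c1 = F c2 →
          ∃ (m : ℕ) (W : ℕ → V), IsDPath E (↑Z) W m ∧ W 0 = X ∧ W m = Y ∧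
          colliderCount E W m ≤ k := by
        intro c1 c2 h1 h2 hlt hFe
        obtain ⟨hz1, p, f, hf0, hfp, hfE, hfZ⟩ := (key c1 h1).choose_spec
        obtain ⟨hz2, q, g, hg0, hgq, hgE, hgZ⟩ := (key c2 h2).choose_spec
        have hzz : (key c2 h2).choose = (key c1 h1).choose := by
          rw [← hFval c1 h1, ← hFval c2 h2, hFe]
        rw [hzz] at hgq
        obtain ⟨m', W', hW', h0', hm', hcnt⟩ :=
          shortcut E (↑Z) hnb W m hW c1 c2 h1.1 hlt h2.2.1 h1.2.2 h2.2.2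
            ((key c1 h1).choose) hz1 p q f g hf0 hfp hfE hfZ hg0 hgq hgE hgZ
        exact ih (colliderCount E W' m') (by omega) m' W' rfl hW'
          (h0'.trans hX) (hm'.trans hY)
      rcases lt_or_gt_of_ne hne with hlt | hlt
      · exact main a b haS hbS hlt hFeq
      · exact main b a hbS haS hlt hFeq.symm
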